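/- Let x = (X_1,…,X_k) and y = (Y_1,…,Y_m) be two samples generated by stationary ergodic process distributions ρ_x and ρ_y respectively (the two sequences need not be independent of each other, but each has a stationary ergodic marginal distribution). Then, with probability 1, the empirical distributional distance between the samples converges to the distributional distance between the distributions: lim_{k,m→∞} d̂((X_1,…,X_k),(Y_1,…,Y_m)) = d(ρ_x,ρ_y) almost surely. -/
import Mathlib


open MeasureTheory Filter Topology

namespace Paper

variable {A : Type*} [MeasurableSpace A]

/-- The left shift on one-sided infinite sequences. -/
def shift (x : ℕ → A) : ℕ → A := fun n => x (n + 1)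

/-- A process distribution is stationary if it is invariant under the left shift. -/
def Stationary (ρ : Measure (ℕ → A)) : Prop := Measure.map shift ρ = ρ

/-- A set of sequences depends only on the first `k` coordinates. -/
def DependsOn (B : Set (ℕ → A)) (k : ℕ) : Prop :=
  ∀ x y : ℕ → A, (∀ i < k, x i = y i) → (x ∈ B ↔ y ∈ B)

/-- Empirical frequency `ν(X_{1..n}, B)` of the `k`-dimensional event `B` in the
first `n` symbols of `x` (0 when `n < k`). -/
noncomputable def freq (B : Set (ℕ → A)) (k n : ℕ) (x : ℕ → A) : ℝ :=
  if k ≤ n then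
    (∑ i ∈ Finset.range (n - k + 1), Set.indicator B (fun _ => (1 : ℝ)) fun j => x (i + j)) /
      ((n : ℝ) - k + 1)
  else 0

/-- Ergodicity: the empirical frequency of every finite-dimensional event converges
almost surely to a constant. -/
def ErgodicFreq (ρ : Measure (ℕ → A)) : Prop :=
  ∀ (k : ℕ) (B : Set (ℕ → A)), MeasurableSet B → DependsOn B k →
    ∃ c : ℝ, ∀ᵐ x ∂ρ, Tendsto (fun n => freq B k n x) atTop (𝓝 c)

/-- A stationary ergodic process distribution. -/
def StatErg (ρ : Measure (ℕ → A)) : Prop :=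
  IsProbabilityMeasure ρ ∧ Stationary ρ ∧ ErgodicFreq ρ

/-- A fixed sequence `(B_i)` of finite-dimensional cylinder events generating the Borel
σ-algebra of `A^∞`, with `dim i` the dimension of `B i`. -/
structure CylBasis (A : Type*) [MeasurableSpace A] where
  B : ℕ → Set (ℕ → A)
  dim : ℕ → ℕ
  dim_pos : ∀ i, 0 < dim i
  meas : ∀ i, MeasurableSet (B i)
  dep : ∀ i, DependsOn (B i) (dim i)
  gen : MeasurableSpace.generateFrom (Set.range B) = (inferInstance : MeasurableSpace (ℕ → A))

/-- Weights `w_i = 1/(i(i+1))` (indexing from 0: `w_i = 1/((i+1)(i+2))`). -/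
noncomputable def wt (i : ℕ) : ℝ := 1 / ((i + 1) * (i + 2))

/-- The distributional distance `d(ρ₁,ρ₂) = Σ_i w_i |ρ₁(B_i) − ρ₂(B_i)|`. -/
noncomputable def dd (𝓑 : CylBasis A) (ρ₁ ρ₂ : Measure (ℕ → A)) : ℝ :=
  ∑' i, wt i * |(ρ₁ (𝓑.B i)).toReal - (ρ₂ (𝓑.B i)).toReal|

/-- The empirical distributional distance `d̂` between the first `n` symbols of `x`
and the first `m` symbols of `y`. -/
noncomputable def hatd2 (𝓑 : CylBasis A) (n m : ℕ) (x y : ℕ → A) : ℝ :=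
  ∑' i, wt i * |freq (𝓑.B i) (𝓑.dim i) n x - freq (𝓑.B i) (𝓑.dim i) m y|

lemma measurable_shift : Measurable (shift : (ℕ → A) → ℕ → A) :=
  measurable_pi_lambda _ fun n => measurable_pi_apply (n + 1)

lemma measurable_shift_iter (i : ℕ) : Measurable (shift^[i] : (ℕ → A) → ℕ → A) :=
  measurable_shift.iterate i

lemma shift_iter (i : ℕ) (x : ℕ → A) : shift^[i] x = fun j => x (i + j) := by
  induction i with
  | zero => simp
  | succ i ih =>
    funext j
    rw [Function.iterate_succ_apply', ih]
    show x (i + (j + 1)) = x (i + 1 + j)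
    congr 1
    omega

lemma map_shift_iter {ρ : Measure (ℕ → A)} (h : Stationary ρ) (i : ℕ) :
    Measure.map (shift^[i]) ρ = ρ := by
  have h' : Measure.map shift ρ = ρ := h
  induction i with
  | zero => simp
  | succ i ih =>
    rw [Function.iterate_succ, ← Measure.map_map (measurable_shift_iter i) measurable_shift,
      h', ih]

lemma measurable_freq {B : Set (ℕ → A)} (hB : MeasurableSet B) (k n : ℕ) :
    Measurable (freq B k n) := by
  unfold freq
  split
  · apply Measurable.div_const
    apply Finset.measurable_sum
    intro i _
    have hm : Measurable fun x : ℕ → A => (fun j => x (i + j)) :=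
      measurable_pi_lambda _ fun j => measurable_pi_apply (i + j)
    exact (measurable_const.indicator hB).comp hm
  · exact measurable_const

lemma freq_nonneg (B : Set (ℕ → A)) (k n : ℕ) (x : ℕ → A) : 0 ≤ freq B k n x := by
  unfold freq
  split
  · rename_i h
    have : (k : ℝ) ≤ n := Nat.cast_le.mpr h
    apply div_nonneg
    · exact Finset.sum_nonneg fun i _ => Set.indicator_nonneg (fun _ _ => zero_le_one) _
    · linarith
  · exact le_refl 0

lemma freq_le_one (B : Set (ℕ → A)) (k n : ℕ) (x : ℕ → A) : freq B k n x ≤ 1 := by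
  unfold freq
  split
  · rename_i h
    have hc : (k : ℝ) ≤ n := Nat.cast_le.mpr h
    rw [div_le_one (by linarith)]
    calc (∑ i ∈ Finset.range (n - k + 1),
          Set.indicator B (fun _ => (1 : ℝ)) fun j => x (i + j))
        ≤ ∑ i ∈ Finset.range (n - k + 1), (1 : ℝ) := by
          apply Finset.sum_le_sum
          intro i _
          exact Set.indicator_apply_le' (fun _ => le_refl 1) (fun _ => zero_le_one)
      _ = ((n - k + 1 : ℕ) : ℝ) := by simp
      _ = (n : ℝ) - k + 1 := by push_cast [Nat.cast_sub h]; ring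
  · exact zero_le_one

lemma indicator_shift_eq (B : Set (ℕ → A)) (i : ℕ) :
    (fun x : ℕ → A => Set.indicator B (fun _ => (1 : ℝ)) fun j => x (i + j))
      = Set.indicator (shift^[i] ⁻¹' B) (fun _ => (1 : ℝ)) := by
  funext x
  rw [show (fun j => x (i + j)) = shift^[i] x from (shift_iter i x).symm]
  by_cases hx : shift^[i] x ∈ B <;> simp [Set.indicator, hx]

lemma integral_term {ρ : Measure (ℕ → A)} [IsProbabilityMeasure ρ] (h : Stationary ρ)
    {B : Set (ℕ → A)} (hB : MeasurableSet B) (i : ℕ) :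
    ∫ x, Set.indicator B (fun _ => (1 : ℝ)) (fun j => x (i + j)) ∂ρ = (ρ B).toReal := by
  rw [show (fun x : ℕ → A => Set.indicator B (fun _ => (1 : ℝ)) fun j => x (i + j))
      = Set.indicator (shift^[i] ⁻¹' B) (fun _ => (1 : ℝ)) from indicator_shift_eq B i]
  have key : ρ (shift^[i] ⁻¹' B) = ρ B := by
    conv_rhs => rw [← map_shift_iter h i]
    rw [Measure.map_apply (measurable_shift_iter i) hB]
  rw [← key]
  exact integral_indicator_one ((measurable_shift_iter i) hB)

lemma integrable_term {ρ : Measure (ℕ → A)} [IsProbabilityMeasure ρ]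
    {B : Set (ℕ → A)} (hB : MeasurableSet B) (i : ℕ) :
    Integrable (fun x : ℕ → A => Set.indicator B (fun _ => (1 : ℝ)) fun j => x (i + j)) ρ := by
  rw [indicator_shift_eq B i]
  exact (integrable_const (1 : ℝ)).indicator ((measurable_shift_iter i) hB)

lemma integral_freq {ρ : Measure (ℕ → A)} [IsProbabilityMeasure ρ] (h : Stationary ρ)
    {B : Set (ℕ → A)} (hB : MeasurableSet B) {k n : ℕ} (hkn : k ≤ n) :
    ∫ x, freq B k n x ∂ρ = (ρ B).toReal := by
  have hcast : ((n : ℝ) - k + 1) = ((n - k + 1 : ℕ) : ℝ) := by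
    push_cast [Nat.cast_sub hkn]; ring
  have hpos : (0 : ℝ) < ((n - k + 1 : ℕ) : ℝ) := by positivity
  simp only [freq, if_pos hkn]
  rw [integral_div, integral_finset_sum _ (fun i _ => integrable_term hB i)]
  rw [Finset.sum_congr rfl (fun i _ => integral_term h hB i)]
  simp only [Finset.sum_const, Finset.card_range, nsmul_eq_mul]
  rw [hcast]
  exact mul_div_cancel_left₀ _ (by positivity)

lemma freq_tendsto_ae {ρ : Measure (ℕ → A)} (h : StatErg ρ) {B : Set (ℕ → A)} {k : ℕ}
    (hB : MeasurableSet B) (hd : DependsOn B k) :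
    ∀ᵐ x ∂ρ, Tendsto (fun n => freq B k n x) atTop (𝓝 (ρ B).toReal) := by
  have : IsProbabilityMeasure ρ := h.1
  obtain ⟨c, hc⟩ := h.2.2 k B hB hd
  have h1 : Tendsto (fun n => ∫ x, freq B k n x ∂ρ) atTop (𝓝 c) := by
    have := tendsto_integral_of_dominated_convergence (μ := ρ)
      (F := fun n x => freq B k n x) (f := fun _ => c) (fun _ => (1 : ℝ))
      (fun n => (measurable_freq hB k n).aestronglyMeasurable)
      (integrable_const 1)
      (fun n => by
        filter_upwards with x
        rw [Real.norm_eq_abs, abs_of_nonneg (freq_nonneg B k n x)]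
        exact freq_le_one B k n x)
      hc
    simpa using this
  have h2 : Tendsto (fun n : ℕ => ∫ x, freq B k n x ∂ρ) atTop (𝓝 ((ρ B).toReal)) := by
    apply Tendsto.congr' _ (tendsto_const_nhds (x := (ρ B).toReal))
    filter_upwards [eventually_ge_atTop k] with n hn
    exact (integral_freq h.2.1 hB hn).symm
  have hce : c = (ρ B).toReal := tendsto_nhds_unique h1 h2
  exact hce ▸ hc

lemma wt_pos (i : ℕ) : 0 < wt i := by unfold wt; positivity

lemma summable_wt : Summable wt := by
  have h0 : Summable (fun n : ℕ => 1 / (n : ℝ) ^ 2) :=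
    Real.summable_one_div_nat_pow.mpr one_lt_two
  have h1 : Summable (fun i : ℕ => 1 / ((i : ℝ) + 1) ^ 2) := by
    have := (summable_nat_add_iff 1).mpr h0
    simpa using this
  apply Summable.of_nonneg_of_le (fun i => (wt_pos i).le) _ h1
  intro i
  unfold wt
  apply one_div_le_one_div_of_le (by positivity)
  nlinarith [Nat.cast_nonneg (α := ℝ) i]

/-- If two (possibly dependent) samples are generated by stationary ergodic
process distributions `ρx` and `ρy`, then with probability 1 the empirical distributional
distance between the samples converges to `d(ρx,ρy)` as both sample lengths go to infinity. -/
theorem empirical_distance_consistent (𝓑 : CylBasis A)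
    (P : Measure ((ℕ → A) × (ℕ → A))) [IsProbabilityMeasure P]
    (ρx ρy : Measure (ℕ → A))
    (hmx : P.map Prod.fst = ρx) (hmy : P.map Prod.snd = ρy)
    (hx : StatErg ρx) (hy : StatErg ρy) :
    ∀ᵐ ω ∂P,
      Tendsto (fun km : ℕ × ℕ => hatd2 𝓑 km.1 km.2 ω.1 ω.2) atTop (𝓝 (dd 𝓑 ρx ρy)) := by
  have : IsProbabilityMeasure ρx := hx.1
  have : IsProbabilityMeasure ρy := hy.1
  have hPx : ∀ᵐ ω ∂P, ∀ i, Tendsto (fun n => freq (𝓑.B i) (𝓑.dim i) n ω.1) atTop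
      (𝓝 ((ρx (𝓑.B i)).toReal)) := by
    rw [ae_all_iff]
    intro i
    have h := freq_tendsto_ae hx (𝓑.meas i) (𝓑.dep i)
    rw [← hmx] at h ⊢
    rw [ae_map_iff measurable_fst.aemeasurable
      (measurableSet_tendsto _ (fun n => measurable_freq (𝓑.meas i) _ n))] at h
    exact h
  have hPy : ∀ᵐ ω ∂P, ∀ i, Tendsto (fun n => freq (𝓑.B i) (𝓑.dim i) n ω.2) atTop
      (𝓝 ((ρy (𝓑.B i)).toReal)) := by
    rw [ae_all_iff]
    intro i
    have h := freq_tendsto_ae hy (𝓑.meas i) (𝓑.dep i)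
    rw [← hmy] at h ⊢
    rw [ae_map_iff measurable_snd.aemeasurable
      (measurableSet_tendsto _ (fun n => measurable_freq (𝓑.meas i) _ n))] at h
    exact h
  filter_upwards [hPx, hPy] with ω h1 h2
  have hfst : Tendsto (Prod.fst : ℕ × ℕ → ℕ) atTop atTop := by
    rw [← prod_atTop_atTop_eq]; exact tendsto_fst
  have hsnd : Tendsto (Prod.snd : ℕ × ℕ → ℕ) atTop atTop := by
    rw [← prod_atTop_atTop_eq]; exact tendsto_snd
  have := tendsto_tsum_of_dominated_convergence (𝓕 := (atTop : Filter (ℕ × ℕ)))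
    (f := fun km i => wt i * |freq (𝓑.B i) (𝓑.dim i) km.1 ω.1
      - freq (𝓑.B i) (𝓑.dim i) km.2 ω.2|)
    (g := fun i => wt i * |(ρx (𝓑.B i)).toReal - (ρy (𝓑.B i)).toReal|)
    (bound := wt) summable_wt
    (fun i => (((h1 i).comp hfst).sub ((h2 i).comp hsnd)).abs.const_mul (wt i))
    (by
      filter_upwards with km i
      have ha := freq_nonneg (𝓑.B i) (𝓑.dim i) km.1 ω.1
      have hb := freq_le_one (𝓑.B i) (𝓑.dim i) km.1 ω.1
      have hc := freq_nonneg (𝓑.B i) (𝓑.dim i) km.2 ω.2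
      have hd := freq_le_one (𝓑.B i) (𝓑.dim i) km.2 ω.2
      have habs : |freq (𝓑.B i) (𝓑.dim i) km.1 ω.1
          - freq (𝓑.B i) (𝓑.dim i) km.2 ω.2| ≤ 1 := by
        rw [abs_sub_le_iff]; constructor <;> linarith
      rw [Real.norm_eq_abs, abs_of_nonneg (mul_nonneg (wt_pos i).le (abs_nonneg _))]
      calc wt i * |_| ≤ wt i * 1 := by
            exact mul_le_mul_of_nonneg_left habs (wt_pos i).le
        _ = wt i := mul_one _)
  exact this


end Paper
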